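/- Let f : ℝ → ℂ be a Schwartz function and a ∈ ℝ with f(a) = 0. Then the function f₁ defined by f₁(t) = f(t)/(t − a) for t ≠ a and f₁(a) = f′(a) is again a Schwartz function, and f(t) = (t − a) f₁(t) for all t. -/

import Mathlib

open intervalIntegral MeasureTheory
open scoped ContDiff

lemma sg_le (m : ℕ) : (m : WithTop ℕ∞) ≤ ∞ := by exact_mod_cast le_top

lemma sg_lt (m : ℕ) : (m : WithTop ℕ∞) < ∞ := by
  exact_mod_cast lt_top_iff_ne_top.2 (by exact_mod_cast ENat.coe_ne_top m)

noncomputable def sgAux (f : SchwartzMap ℝ ℂ) (a : ℝ) (n : ℕ) (t : ℝ) : ℂ :=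
  ∫ s in (0:ℝ)..1, s ^ n • iteratedDeriv (n + 1) (⇑f) (a + s * (t - a))

lemma sgAux_cont_integrand (f : SchwartzMap ℝ ℂ) (a : ℝ) (n m : ℕ) (t : ℝ) :
    Continuous fun s : ℝ => s ^ n • iteratedDeriv m (⇑f) (a + s * (t - a)) :=
  (continuous_pow n).smul <| (f.smooth'.continuous_iteratedDeriv m (sg_le _)).comp (by continuity)

lemma sgAux_bound (f : SchwartzMap ℝ ℂ) (m : ℕ) : ∃ C : ℝ, 0 < C ∧ ∀ x : ℝ, ‖iteratedDeriv m (⇑f) x‖ ≤ C := by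
  obtain ⟨C, hC, h⟩ := f.decay 0 m
  exact ⟨C, hC, fun x => by simpa [norm_iteratedFDeriv_eq_norm_iteratedDeriv] using h x⟩

lemma sgAux_hasDerivAt (f : SchwartzMap ℝ ℂ) (a : ℝ) (n : ℕ) (t : ℝ) :
    HasDerivAt (sgAux f a n) (sgAux f a (n + 1) t) t := by
  obtain ⟨C, hC, hCb⟩ := sgAux_bound f (n + 2)
  have hdiff : ∀ s : ℝ, ∀ x : ℝ, HasDerivAt (fun x : ℝ => s ^ n • iteratedDeriv (n + 1) (⇑f) (a + s * (x - a)))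
      (s ^ (n + 1) • iteratedDeriv (n + 2) (⇑f) (a + s * (x - a))) x := by
    intro s x
    have hin : HasDerivAt (fun x : ℝ => a + s * (x - a)) s x := by
      simpa using (((hasDerivAt_id x).sub_const a).const_mul s).const_add a
    have hF : HasDerivAt (iteratedDeriv (n + 1) (⇑f)) (iteratedDeriv (n + 2) (⇑f) (a + s * (x - a))) (a + s * (x - a)) := by
      have h := ((f.smooth'.differentiable_iteratedDeriv (n+1) (sg_lt (n+1))) (a + s * (x - a))).hasDerivAt
      rw [← iteratedDeriv_succ] at h
      exact h
    have := (hF.scomp x hin).const_smul (s ^ n)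
    have e : s ^ (n + 1) • iteratedDeriv (n + 2) (⇑f) (a + s * (x - a))
        = s ^ n • s • iteratedDeriv (n + 2) (⇑f) (a + s * (x - a)) := by rw [smul_smul, pow_succ]
    rw [e]; exact this
  have key := intervalIntegral.hasDerivAt_integral_of_dominated_loc_of_deriv_le (F := fun x s => s ^ n • iteratedDeriv (n + 1) (⇑f) (a + s * (x - a)))
      (F' := fun x s => s ^ (n + 1) • iteratedDeriv (n + 2) (⇑f) (a + s * (x - a)))
      (x₀ := t) (a := (0:ℝ)) (b := 1) (μ := MeasureTheory.volume) (bound := fun _ => C) (s := Metric.ball t 1) (Metric.ball_mem_nhds t one_pos)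
      (Filter.Eventually.of_forall fun x => (sgAux_cont_integrand f a n (n+1) x).aestronglyMeasurable.restrict)
      ((sgAux_cont_integrand f a n (n+1) t).intervalIntegrable 0 1)
      ((sgAux_cont_integrand f a (n+1) (n+2) t).aestronglyMeasurable.restrict)
      (Filter.Eventually.of_forall fun s hs x _ => by
        have hs' : s ∈ Set.Ioc (0:ℝ) 1 := by simpa using hs
        have : |s| ^ (n+1) ≤ 1 := by
          rw [abs_of_pos hs'.1]
          exact pow_le_one₀ hs'.1.le hs'.2
        calc ‖s ^ (n+1) • iteratedDeriv (n + 2) (⇑f) (a + s * (x - a))‖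
            = |s| ^ (n+1) * ‖iteratedDeriv (n + 2) (⇑f) (a + s * (x - a))‖ := by
              rw [norm_smul]; simp [abs_pow]
          _ ≤ 1 * C := mul_le_mul this (hCb _) (norm_nonneg _) zero_le_one
          _ = C := one_mul C)
      (intervalIntegrable_const)
      (Filter.Eventually.of_forall fun s _ x _ => hdiff s x)
  exact key.2

lemma sg_deriv (f : SchwartzMap ℝ ℂ) (a : ℝ) (n : ℕ) :
    deriv (sgAux f a n) = sgAux f a (n + 1) :=
  funext fun t => (sgAux_hasDerivAt f a n t).deriv

lemma sg_contDiff (f : SchwartzMap ℝ ℂ) (a : ℝ) (N : ℕ) :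
    ∀ n, ContDiff ℝ (N : WithTop ℕ∞) (sgAux f a n) := by
  induction N with
  | zero =>
    intro n
    have hd : Differentiable ℝ (sgAux f a n) := fun t => (sgAux_hasDerivAt f a n t).differentiableAt
    exact_mod_cast contDiff_zero.2 hd.continuous
  | succ N ih =>
    intro n
    have : ((N + 1 : ℕ) : WithTop ℕ∞) = (N : WithTop ℕ∞) + 1 := by push_cast; ring
    rw [this]
    refine contDiff_succ_iff_deriv.2 ⟨fun t => (sgAux_hasDerivAt f a n t).differentiableAt,
      ?_, ?_⟩
    · intro h; exact absurd h (by simp)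
    · rw [sg_deriv]; exact ih (n + 1)

lemma sg_smooth (f : SchwartzMap ℝ ℂ) (a : ℝ) : ContDiff ℝ ∞ (sgAux f a 0) :=
  contDiff_infty.2 fun N => sg_contDiff f a N 0

lemma sg_iteratedDeriv (f : SchwartzMap ℝ ℂ) (a : ℝ) (n : ℕ) :
    iteratedDeriv n (sgAux f a 0) = sgAux f a n := by
  induction n with
  | zero => exact iteratedDeriv_zero
  | succ n ih => rw [iteratedDeriv_succ, ih, sg_deriv]

lemma inner_hasDerivAt (a t s : ℝ) : HasDerivAt (fun s : ℝ => a + s * (t - a)) (t - a) s := by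
  simpa using ((hasDerivAt_id s).mul_const (t - a)).const_add a

lemma sg_mul (f : SchwartzMap ℝ ℂ) (a : ℝ) (hfa : f a = 0) (t : ℝ) :
    f t = (t - a) • sgAux f a 0 t := by
  have hderiv : ∀ s ∈ Set.uIcc (0:ℝ) 1,
      HasDerivAt (fun s : ℝ => f (a + s * (t - a)))
        ((t - a) • deriv (⇑f) (a + s * (t - a))) s := fun s _ => by
    have hf : HasDerivAt (⇑f) (deriv (⇑f) (a + s * (t - a))) (a + s * (t - a)) :=
      (((f.smooth 1).differentiable one_ne_zero) _).hasDerivAt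
    exact hf.scomp s (inner_hasDerivAt a t s)
  have hint : IntervalIntegrable (fun s : ℝ => (t - a) • deriv (⇑f) (a + s * (t - a)))
      MeasureTheory.volume 0 1 := by
    have := (sgAux_cont_integrand f a 0 1 t).const_smul (t - a)
    simpa [iteratedDeriv_one, Pi.smul_def] using this.intervalIntegrable (μ := volume) 0 1
  have key := intervalIntegral.integral_eq_sub_of_hasDerivAt hderiv hint
  simp only [one_mul, zero_mul, add_zero, add_sub_cancel, hfa, sub_zero] at key
  rw [← key, intervalIntegral.integral_smul]
  congr 1
  simp [sgAux, iteratedDeriv_one]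

lemma sg_rec (f : SchwartzMap ℝ ℂ) (a : ℝ) (n : ℕ) (t : ℝ) :
    iteratedDeriv (n + 1) (⇑f) t
      = ((n + 1 : ℝ)) • sgAux f a n t + (t - a) • sgAux f a (n + 1) t := by
  set G := iteratedDeriv (n + 1) (⇑f) with hG
  have hderiv : ∀ s ∈ Set.uIcc (0:ℝ) 1,
      HasDerivAt (fun s : ℝ => s ^ (n + 1) • G (a + s * (t - a)))
        (s ^ (n + 1) • ((t - a) • iteratedDeriv (n + 2) (⇑f) (a + s * (t - a)))
          + ((n + 1 : ℝ) * s ^ n) • G (a + s * (t - a))) s := by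
    intro s _
    have hc : HasDerivAt (fun s : ℝ => s ^ (n + 1)) ((n + 1 : ℝ) * s ^ n) s := by
      simpa using hasDerivAt_pow (n + 1) s
    have hGd : HasDerivAt G (iteratedDeriv (n + 2) (⇑f) (a + s * (t - a))) (a + s * (t - a)) := by
      have h := ((f.smooth'.differentiable_iteratedDeriv (n+1) (sg_lt (n+1))) (a + s * (t - a))).hasDerivAt
      rw [← iteratedDeriv_succ] at h
      exact h
    have hcomp : HasDerivAt (fun s : ℝ => G (a + s * (t - a)))
        ((t - a) • iteratedDeriv (n + 2) (⇑f) (a + s * (t - a))) s :=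
      by have h := hGd.scomp s (inner_hasDerivAt a t s); exact h
    exact hc.smul hcomp
  have hint1 : IntervalIntegrable (fun s : ℝ => ((n + 1 : ℝ) * s ^ n) • G (a + s * (t - a)))
      MeasureTheory.volume 0 1 := by
    have hcont : Continuous fun s : ℝ => ((n + 1 : ℝ) * s ^ n) • G (a + s * (t - a)) :=
      (continuous_const.mul (continuous_pow n)).smul
        ((f.smooth'.continuous_iteratedDeriv (n+1) (sg_le _)).comp
          (by continuity : Continuous fun s : ℝ => a + s * (t - a)))
    exact hcont.intervalIntegrable 0 1
  have hint2 : IntervalIntegrable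
      (fun s : ℝ => s ^ (n + 1) • ((t - a) • iteratedDeriv (n + 2) (⇑f) (a + s * (t - a))))
      MeasureTheory.volume 0 1 := by
    have := ((sgAux_cont_integrand f a (n+1) (n+2) t).const_smul (t - a))
    have h2 : Continuous fun s : ℝ =>
        s ^ (n + 1) • ((t - a) • iteratedDeriv (n + 2) (⇑f) (a + s * (t - a))) :=
      (continuous_pow (n+1)).smul ((continuous_const (y := t - a)).smul
        ((f.smooth'.continuous_iteratedDeriv (n+2) (sg_le _)).comp
          (by continuity : Continuous fun s : ℝ => a + s * (t - a))))
    exact h2.intervalIntegrable 0 1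
  have key := intervalIntegral.integral_eq_sub_of_hasDerivAt hderiv (hint2.add hint1)
  have e1 : (1:ℝ) ^ (n+1) • G (a + 1 * (t - a)) = G t := by norm_num
  have e0 : (0:ℝ) ^ (n+1) • G (a + 0 * (t - a)) = 0 := by simp
  rw [intervalIntegral.integral_add hint2 hint1, e1, e0, sub_zero] at key
  have l1 : (∫ s in (0:ℝ)..1, ((n + 1 : ℝ) * s ^ n) • G (a + s * (t - a)))
      = (n + 1 : ℝ) • sgAux f a n t := by
    rw [show (fun s : ℝ => ((n + 1 : ℝ) * s ^ n) • G (a + s * (t - a)))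
        = fun s : ℝ => (n + 1 : ℝ) • (s ^ n • G (a + s * (t - a))) from
      funext fun s => by rw [mul_smul],
      intervalIntegral.integral_smul]
    rfl
  have l2 : (∫ s in (0:ℝ)..1,
        s ^ (n + 1) • ((t - a) • iteratedDeriv (n + 2) (⇑f) (a + s * (t - a))))
      = (t - a) • sgAux f a (n + 1) t := by
    rw [show (fun s : ℝ => s ^ (n + 1) • ((t - a) • iteratedDeriv (n + 2) (⇑f) (a + s * (t - a))))
        = fun s : ℝ => (t - a) • (s ^ (n + 1) • iteratedDeriv (n + 2) (⇑f) (a + s * (t - a))) from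
      funext fun s => smul_comm _ _ _,
      intervalIntegral.integral_smul]
    rfl
  rw [l1, l2] at key
  rw [← key, add_comm]

lemma sg_decay_iter (f : SchwartzMap ℝ ℂ) (k m : ℕ) :
    ∃ C : ℝ, 0 ≤ C ∧ ∀ x : ℝ, ‖x‖ ^ k * ‖iteratedDeriv m (⇑f) x‖ ≤ C := by
  obtain ⟨C, hC, h⟩ := f.decay k m
  exact ⟨C, hC.le, fun x => by
    simpa [norm_iteratedFDeriv_eq_norm_iteratedDeriv] using h x⟩

lemma sg_far (f : SchwartzMap ℝ ℂ) (a : ℝ) (hfa : f a = 0) (n : ℕ) :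
    ∀ k : ℕ, ∃ C : ℝ, 0 ≤ C ∧ ∀ x : ℝ, 1 ≤ |x - a| → ‖x‖ ^ k * ‖sgAux f a n x‖ ≤ C := by
  induction n with
  | zero =>
    intro k
    obtain ⟨C, hC, h⟩ := sg_decay_iter f k 0
    refine ⟨C, hC, fun x hx => ?_⟩
    have hfx : ‖f x‖ = |x - a| * ‖sgAux f a 0 x‖ := by
      rw [sg_mul f a hfa x, norm_smul, Real.norm_eq_abs]
    have h1 : ‖sgAux f a 0 x‖ ≤ ‖f x‖ := by
      rw [hfx]
      nlinarith [norm_nonneg (sgAux f a 0 x)]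
    calc ‖x‖ ^ k * ‖sgAux f a 0 x‖ ≤ ‖x‖ ^ k * ‖f x‖ :=
          mul_le_mul_of_nonneg_left h1 (by positivity)
      _ ≤ C := by simpa [iteratedDeriv_zero] using h x
  | succ n ih =>
    intro k
    obtain ⟨C1, hC1, h1⟩ := sg_decay_iter f k (n + 1)
    obtain ⟨C2, hC2, h2⟩ := ih k
    refine ⟨C1 + (n + 1) * C2, by positivity, fun x hx => ?_⟩
    have hrec := sg_rec f a n x
    have key : (x - a) • sgAux f a (n + 1) x
        = iteratedDeriv (n + 1) (⇑f) x - (n + 1 : ℝ) • sgAux f a n x := by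
      rw [hrec]; ring_nf
    have hb : ‖sgAux f a (n + 1) x‖ ≤ ‖iteratedDeriv (n + 1) (⇑f) x‖
        + (n + 1) * ‖sgAux f a n x‖ := by
      have e : ‖(x - a) • sgAux f a (n + 1) x‖ = |x - a| * ‖sgAux f a (n + 1) x‖ := by
        rw [norm_smul, Real.norm_eq_abs]
      have e2 : ‖sgAux f a (n + 1) x‖ ≤ |x - a| * ‖sgAux f a (n + 1) x‖ := by
        nlinarith [norm_nonneg (sgAux f a (n + 1) x)]
      calc ‖sgAux f a (n + 1) x‖ ≤ ‖(x - a) • sgAux f a (n + 1) x‖ := by rw [e]; exact e2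
        _ = ‖iteratedDeriv (n + 1) (⇑f) x - (n + 1 : ℝ) • sgAux f a n x‖ := by rw [key]
        _ ≤ ‖iteratedDeriv (n + 1) (⇑f) x‖ + ‖(n + 1 : ℝ) • sgAux f a n x‖ := norm_sub_le _ _
        _ = ‖iteratedDeriv (n + 1) (⇑f) x‖ + (n + 1) * ‖sgAux f a n x‖ := by
            rw [norm_smul, Real.norm_eq_abs, abs_of_nonneg (by positivity : (0:ℝ) ≤ (n:ℝ) + 1)]
    calc ‖x‖ ^ k * ‖sgAux f a (n + 1) x‖
        ≤ ‖x‖ ^ k * (‖iteratedDeriv (n + 1) (⇑f) x‖ + (n + 1) * ‖sgAux f a n x‖) :=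
          mul_le_mul_of_nonneg_left hb (by positivity)
      _ = ‖x‖ ^ k * ‖iteratedDeriv (n + 1) (⇑f) x‖
          + (n + 1) * (‖x‖ ^ k * ‖sgAux f a n x‖) := by ring
      _ ≤ C1 + (n + 1) * C2 := by
          have := h1 x
          have := h2 x hx
          nlinarith [mul_le_mul_of_nonneg_left (h2 x hx) (by positivity : (0:ℝ) ≤ (n:ℝ) + 1)]

lemma sg_near (f : SchwartzMap ℝ ℂ) (a : ℝ) (n : ℕ) :
    ∃ B : ℝ, 0 ≤ B ∧ ∀ x : ℝ, ‖sgAux f a n x‖ ≤ B := by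
  obtain ⟨C, hC, h⟩ := sgAux_bound f (n + 1)
  refine ⟨C, hC.le, fun x => ?_⟩
  have := intervalIntegral.norm_integral_le_of_norm_le_const
    (a := (0:ℝ)) (b := 1) (C := C)
    (f := fun s : ℝ => s ^ n • iteratedDeriv (n + 1) (⇑f) (a + s * (x - a))) ?_
  · simpa [sgAux] using this
  · intro s hs
    have hs' : s ∈ Set.Ioc (0:ℝ) 1 := by simpa using hs
    have h1 : |s| ^ n ≤ 1 := by
      rw [abs_of_pos hs'.1]; exact pow_le_one₀ hs'.1.le hs'.2
    calc ‖s ^ n • iteratedDeriv (n + 1) (⇑f) (a + s * (x - a))‖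
        = |s| ^ n * ‖iteratedDeriv (n + 1) (⇑f) (a + s * (x - a))‖ := by
          rw [norm_smul]; simp [abs_pow]
      _ ≤ 1 * C := mul_le_mul h1 (h _) (norm_nonneg _) zero_le_one
      _ = C := one_mul C

lemma sg_decay (f : SchwartzMap ℝ ℂ) (a : ℝ) (hfa : f a = 0) (k n : ℕ) :
    ∃ C : ℝ, ∀ x : ℝ, ‖x‖ ^ k * ‖iteratedFDeriv ℝ n (sgAux f a 0) x‖ ≤ C := by
  obtain ⟨C1, hC1, h1⟩ := sg_far f a hfa n k
  obtain ⟨B, hB, h2⟩ := sg_near f a n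
  refine ⟨max C1 ((|a| + 1) ^ k * B), fun x => ?_⟩
  rw [norm_iteratedFDeriv_eq_norm_iteratedDeriv, sg_iteratedDeriv]
  by_cases hx : 1 ≤ |x - a|
  · exact (h1 x hx).trans (le_max_left _ _)
  · push_neg at hx
    have hxn : ‖x‖ ≤ |a| + 1 := by
      rw [Real.norm_eq_abs]
      have := abs_sub_abs_le_abs_sub x a
      linarith [hx.le]
    refine le_trans ?_ (le_max_right _ _)
    have : ‖x‖ ^ k ≤ (|a| + 1) ^ k := pow_le_pow_left₀ (norm_nonneg x) hxn k
    exact mul_le_mul this (h2 x) (norm_nonneg _) (by positivity)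




/-- If `f` is a Schwartz function on `ℝ` with `f(a) = 0`, then `f₁(t) = f(t)/(t−a)`
(with `f₁(a) = f′(a)`) is again a Schwartz function and `f(t) = (t−a) f₁(t)` for all `t`. -/
theorem schwartz_div_sub (f : SchwartzMap ℝ ℂ) (a : ℝ) (hfa : f a = 0) :
    ∃ f₁ : SchwartzMap ℝ ℂ,
      (∀ t : ℝ, t ≠ a → f₁ t = f t / ((t - a : ℝ) : ℂ)) ∧
      f₁ a = deriv (⇑f) a ∧
      ∀ t : ℝ, f t = ((t - a : ℝ) : ℂ) * f₁ t := by
  refine ⟨⟨sgAux f a 0, sg_smooth f a, sg_decay f a hfa⟩, ?_, ?_, ?_⟩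
  · intro t ht
    have hmul := sg_mul f a hfa t
    have hne : ((t - a : ℝ) : ℂ) ≠ 0 := by
      exact_mod_cast sub_ne_zero.2 ht
    show sgAux f a 0 t = f t / ((t - a : ℝ) : ℂ)
    rw [hmul]
    rw [Complex.real_smul]
    have hne' : ((t:ℂ) - (a:ℂ)) ≠ 0 := by push_cast at hne; exact hne
    push_cast
    exact (mul_div_cancel_left₀ _ hne').symm
  · show sgAux f a 0 a = deriv (⇑f) a
    simp [sgAux, iteratedDeriv_one]
  · intro t
    have hmul := sg_mul f a hfa t
    show f t = ((t - a : ℝ) : ℂ) * sgAux f a 0 t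
    rw [hmul, Complex.real_smul]
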